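/- Let L be a discrete subgroup (lattice) of ℝ^m × ℝ^n such that the projection p_2 restricted to L is injective and the image p_2(L) is dense in ℝ^n, and let W, W' ⊆ ℝ^n be bounded sets. For a set V ⊆ ℝ^n write L_V = { γ ∈ L : p_2(γ) ∈ V }. If L_W and L_{W'} are bounded distance equivalent with constant K, then for every x ∈ ℝ^n satisfying (∂W − x) ∩ p_2(L) = ∅ and (∂W' − x) ∩ p_2(L) = ∅, the sets L_{W−x} and L_{W'−x} are bounded distance equivalent with the same constant K. -/

import Mathlib

open Filter

/-- Ultrafilter pigeonhole: a function landing `U`-often in a finite set takes some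
value `U`-often. -/
lemma ultra_pigeon {ι α : Type*} (U : Ultrafilter ι) {B : Set α} (hB : B.Finite)
    {F : ι → α} (h : {k | F k ∈ B} ∈ U) : ∃ v ∈ B, {k | F k = v} ∈ U := by
  by_contra hc
  push_neg at hc
  have h2 : ∀ v ∈ B, {k | F k = v}ᶜ ∈ U := fun v hv =>
    Ultrafilter.compl_mem_iff_notMem.2 (hc v hv)
  have h3 : (⋂ v ∈ B, {k | F k = v}ᶜ) ∈ U := (biInter_mem hB).2 h2
  obtain ⟨k, hk1, hk2⟩ := Filter.nonempty_of_mem (Filter.inter_mem h h3)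
  simp only [Set.mem_iInter, Set.mem_compl_iff, Set.mem_setOf_eq] at hk2
  exact hk2 (F k) hk1 rfl

/-- A point of a set not in its frontier is in the interior. -/
lemma mem_interior_of_not_frontier {α : Type*} [TopologicalSpace α] {s : Set α} {z : α}
    (hz : z ∈ s) (hf : z ∉ frontier s) : z ∈ interior s := by
  by_contra h
  exact hf ⟨subset_closure hz, h⟩

/-- A closure point not in the frontier is in the interior. -/
lemma mem_interior_of_closure_not_frontier {α : Type*} [TopologicalSpace α] {s : Set α} {z : α}
    (hz : z ∈ closure s) (hf : z ∉ frontier s) : z ∈ interior s := by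
  by_contra h
  exact hf ⟨hz, h⟩

lemma mem_sub_image_iff {n : ℕ} (W : Set (Fin n → ℝ)) (x z : Fin n → ℝ) :
    z ∈ (fun y => y - x) '' W ↔ z + x ∈ W := by
  constructor
  · rintro ⟨y, hy, rfl⟩; simpa [sub_add_cancel] using hy
  · intro h; exact ⟨z + x, h, by simp⟩

/-- Two point sets in a metric space are bounded distance equivalent with constant `K`:
there is a bijection moving every point a distance at most `K`. -/
def BDEquivWith {E : Type*} [MetricSpace E] (Λ Λ' : Set E) (K : ℝ) : Prop :=
  ∃ χ : Λ → Λ', Function.Bijective χ ∧ ∀ p : Λ, dist (χ p : E) (p : E) ≤ K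

/-- The lift `L_V = { γ ∈ L : p₂(γ) ∈ V }`. -/
def liftedSet {m n : ℕ} (L : AddSubgroup ((Fin m → ℝ) × (Fin n → ℝ)))
    (V : Set (Fin n → ℝ)) : Set ((Fin m → ℝ) × (Fin n → ℝ)) :=
  {γ | γ ∈ L ∧ γ.2 ∈ V}

/-- Let `L` be a discrete subgroup (lattice) of `ℝ^m × ℝ^n` with `p₂|_L` injective and
`p₂(L)` dense in `ℝ^n`, and let `W, W'` be bounded sets. If `L_W` and `L_{W'}` are bounded
distance equivalent with constant `K`, then for every `x ∈ ℝ^n` with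
`(∂W − x) ∩ p₂(L) = ∅` and `(∂W' − x) ∩ p₂(L) = ∅`, the sets `L_{W−x}` and `L_{W'−x}`
are bounded distance equivalent with the same constant `K`. -/
theorem bde_translated_windows {m n : ℕ}
    (L : AddSubgroup ((Fin m → ℝ) × (Fin n → ℝ))) (hdisc : DiscreteTopology L)
    (hinj : Set.InjOn Prod.snd (L : Set ((Fin m → ℝ) × (Fin n → ℝ))))
    (hdense : Dense (Prod.snd '' (L : Set ((Fin m → ℝ) × (Fin n → ℝ)))))
    (W W' : Set (Fin n → ℝ))
    (hWbd : Bornology.IsBounded W) (hW'bd : Bornology.IsBounded W')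
    (K : ℝ) (hK : 0 < K)
    (hbde : BDEquivWith (liftedSet L W) (liftedSet L W') K)
    (x : Fin n → ℝ)
    (hxW : ((fun y => y - x) '' frontier W) ∩
      (Prod.snd '' (L : Set ((Fin m → ℝ) × (Fin n → ℝ)))) = ∅)
    (hxW' : ((fun y => y - x) '' frontier W') ∩
      (Prod.snd '' (L : Set ((Fin m → ℝ) × (Fin n → ℝ)))) = ∅) :
    BDEquivWith (liftedSet L ((fun y => y - x) '' W))
      (liftedSet L ((fun y => y - x) '' W')) K := by
  classical
  -- `L` is closed and locally finite
  have hLclosed : IsClosed (L : Set ((Fin m → ℝ) × (Fin n → ℝ))) :=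
    AddSubgroup.isClosed_of_discrete
  have hfin : ∀ (a : (Fin m → ℝ) × (Fin n → ℝ)) (r : ℝ),
      ((L : Set ((Fin m → ℝ) × (Fin n → ℝ))) ∩ Metric.closedBall a r).Finite := by
    intro a r
    have hcpt : IsCompact ((L : Set _) ∩ Metric.closedBall a r) :=
      (isCompact_closedBall a r).inter_left hLclosed
    have hd : DiscreteTopology ((L : Set ((Fin m → ℝ) × (Fin n → ℝ))) ∩ Metric.closedBall a r :
        Set ((Fin m → ℝ) × (Fin n → ℝ))) :=
      DiscreteTopology.of_subset hdisc Set.inter_subset_left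
    exact hcpt.finite (isDiscrete_iff_discreteTopology.mpr hd)
  -- an approximating sequence of lattice points
  obtain ⟨t0, ht0mem, ht0lim⟩ := mem_closure_iff_seq_limit.1 (hdense x)
  have hchoice : ∀ k, ∃ γ ∈ (L : Set ((Fin m → ℝ) × (Fin n → ℝ))), γ.2 = t0 k := by
    intro k; obtain ⟨γ, hγ, h2⟩ := ht0mem k; exact ⟨γ, hγ, h2⟩
  choose γ hγL hγ2 using hchoice
  set t : ℕ → (Fin n → ℝ) := fun k => (γ k).2 with ht
  have htlim : Tendsto t atTop (nhds x) := by
    have : t = t0 := funext hγ2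
    rw [this]; exact ht0lim
  -- the given bijection, as maps on the ambient space
  obtain ⟨χ, hbij, hmove⟩ := hbde
  set e : liftedSet L W ≃ liftedSet L W' := Equiv.ofBijective χ hbij with he
  set g : ((Fin m → ℝ) × (Fin n → ℝ)) → ((Fin m → ℝ) × (Fin n → ℝ)) :=
    fun a => if ha : a ∈ liftedSet L W then (e ⟨a, ha⟩ : _) else a with hg
  set gi : ((Fin m → ℝ) × (Fin n → ℝ)) → ((Fin m → ℝ) × (Fin n → ℝ)) :=
    fun b => if hb : b ∈ liftedSet L W' then (e.symm ⟨b, hb⟩ : _) else b with hgi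
  have hg_mem : ∀ a, a ∈ liftedSet L W → g a ∈ liftedSet L W' := by
    intro a ha; simp only [hg, dif_pos ha]; exact (e ⟨a, ha⟩).2
  have hgi_mem : ∀ b, b ∈ liftedSet L W' → gi b ∈ liftedSet L W := by
    intro b hb; simp only [hgi, dif_pos hb]; exact (e.symm ⟨b, hb⟩).2
  have hg_dist : ∀ a, a ∈ liftedSet L W → dist (g a) a ≤ K := by
    intro a ha; simp only [hg, dif_pos ha]
    exact hmove ⟨a, ha⟩
  have hgi_g : ∀ a, a ∈ liftedSet L W → gi (g a) = a := by
    intro a ha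
    have h1 : g a ∈ liftedSet L W' := hg_mem a ha
    simp only [hgi, dif_pos h1]
    have : (⟨g a, h1⟩ : liftedSet L W') = e ⟨a, ha⟩ := by
      apply Subtype.ext; simp only [hg, dif_pos ha]
    rw [this, Equiv.symm_apply_apply]
  have hg_gi : ∀ b, b ∈ liftedSet L W' → g (gi b) = b := by
    intro b hb
    have h1 : gi b ∈ liftedSet L W := hgi_mem b hb
    simp only [hg, dif_pos h1]
    have : (⟨gi b, h1⟩ : liftedSet L W) = e.symm ⟨b, hb⟩ := by
      apply Subtype.ext; simp only [hgi, dif_pos hb]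
    rw [this, Equiv.apply_symm_apply]
  have hgi_dist : ∀ b, b ∈ liftedSet L W' → dist (gi b) b ≤ K := by
    intro b hb
    have h1 : gi b ∈ liftedSet L W := hgi_mem b hb
    have := hg_dist _ h1
    rw [hg_gi b hb] at this
    rw [dist_comm] at this; exact this
  -- the ultrafilter
  set U : Ultrafilter ℕ := Ultrafilter.of atTop with hUdef
  have hU : (U : Filter ℕ) ≤ atTop := Ultrafilter.of_le atTop
  -- membership transfer along the ultrafilter
  have key : ∀ (V : Set (Fin n → ℝ)),
      ((fun y => y - x) '' frontier V) ∩ (Prod.snd '' (L : Set ((Fin m → ℝ) × (Fin n → ℝ)))) = ∅ →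
      ∀ v : (Fin m → ℝ) × (Fin n → ℝ), v ∈ L →
      (({k | v.2 + t k ∈ V} ∈ U → v.2 + x ∈ V) ∧
       (v.2 + x ∈ V → {k | v.2 + t k ∈ V} ∈ U)) := by
    intro V hV v hv
    have hvfr : v.2 + x ∉ frontier V := by
      intro hfr
      have hmm : v.2 ∈ ((fun y => y - x) '' frontier V) ∩ (Prod.snd '' (L : Set ((Fin m → ℝ) × (Fin n → ℝ)))) :=
        ⟨⟨v.2 + x, hfr, by simp⟩, ⟨v, hv, rfl⟩⟩
      rw [hV] at hmm; exact hmm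
    have htd : Tendsto (fun k => v.2 + t k) (↑U) (nhds (v.2 + x)) :=
      tendsto_const_nhds.add (htlim.mono_left hU)
    constructor
    · intro hmem
      have hcl : v.2 + x ∈ closure V := mem_closure_of_tendsto htd hmem
      exact interior_subset (mem_interior_of_closure_not_frontier hcl hvfr)
    · intro hmem
      have hint : v.2 + x ∈ interior V := mem_interior_of_not_frontier hmem hvfr
      have hev : ∀ᶠ k in (↑U : Filter ℕ), v.2 + t k ∈ interior V :=
        htd.eventually (isOpen_interior.mem_nhds hint)
      exact hev.mono (fun k hk => interior_subset hk)
  -- the translated bijections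
  set gk : ℕ → ((Fin m → ℝ) × (Fin n → ℝ)) → ((Fin m → ℝ) × (Fin n → ℝ)) :=
    fun k a => g (a + γ k) - γ k with hgk
  set gik : ℕ → ((Fin m → ℝ) × (Fin n → ℝ)) → ((Fin m → ℝ) × (Fin n → ℝ)) :=
    fun k b => gi (b + γ k) - γ k with hgik
  have hAk : ∀ k a, a ∈ L → a.2 + t k ∈ W → a + γ k ∈ liftedSet L W := by
    intro k a haL haW
    exact ⟨L.add_mem haL (hγL k), haW⟩
  have hAk' : ∀ k b, b ∈ L → b.2 + t k ∈ W' → b + γ k ∈ liftedSet L W' := by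
    intro k b hbL hbW
    exact ⟨L.add_mem hbL (hγL k), hbW⟩
  have hgk_mem : ∀ k a, a ∈ L → a.2 + t k ∈ W →
      gk k a ∈ L ∧ (gk k a).2 + t k ∈ W' := by
    intro k a haL haW
    have h1 := hg_mem _ (hAk k a haL haW)
    refine ⟨L.sub_mem h1.1 (hγL k), ?_⟩
    have : (gk k a).2 = (g (a + γ k)).2 - t k := rfl
    rw [this, sub_add_cancel]
    exact h1.2
  have hgik_mem : ∀ k b, b ∈ L → b.2 + t k ∈ W' →
      gik k b ∈ L ∧ (gik k b).2 + t k ∈ W := by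
    intro k b hbL hbW
    have h1 := hgi_mem _ (hAk' k b hbL hbW)
    refine ⟨L.sub_mem h1.1 (hγL k), ?_⟩
    have : (gik k b).2 = (gi (b + γ k)).2 - t k := rfl
    rw [this, sub_add_cancel]
    exact h1.2
  have hgk_dist : ∀ k a, a ∈ L → a.2 + t k ∈ W → dist (gk k a) a ≤ K := by
    intro k a haL haW
    calc dist (g (a + γ k) - γ k) a
        = dist (g (a + γ k) - γ k) ((a + γ k) - γ k) := by rw [add_sub_cancel_right]
      _ = dist (g (a + γ k)) (a + γ k) := dist_sub_right _ _ _
      _ ≤ K := hg_dist _ (hAk k a haL haW)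
  have hgik_dist : ∀ k b, b ∈ L → b.2 + t k ∈ W' → dist (gik k b) b ≤ K := by
    intro k b hbL hbW
    calc dist (gi (b + γ k) - γ k) b
        = dist (gi (b + γ k) - γ k) ((b + γ k) - γ k) := by rw [add_sub_cancel_right]
      _ = dist (gi (b + γ k)) (b + γ k) := dist_sub_right _ _ _
      _ ≤ K := hgi_dist _ (hAk' k b hbL hbW)
  have hgik_gk : ∀ k a, a ∈ L → a.2 + t k ∈ W → gik k (gk k a) = a := by
    intro k a haL haW
    show gi (g (a + γ k) - γ k + γ k) - γ k = a
    rw [sub_add_cancel, hgi_g _ (hAk k a haL haW), add_sub_cancel_right]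
  have hgk_gik : ∀ k b, b ∈ L → b.2 + t k ∈ W' → gk k (gik k b) = b := by
    intro k b hbL hbW
    show g (gi (b + γ k) - γ k + γ k) - γ k = b
    rw [sub_add_cancel, hg_gi _ (hAk' k b hbL hbW), add_sub_cancel_right]
  -- the key existence steps
  have hstep : ∀ a : (Fin m → ℝ) × (Fin n → ℝ), a ∈ L → a.2 + x ∈ W →
      ∃ v, (v ∈ L ∧ v.2 + x ∈ W') ∧ dist v a ≤ K ∧
        {k | (a.2 + t k ∈ W) ∧ gk k a = v} ∈ U := by
    intro a haL haW
    have hq : {k | a.2 + t k ∈ W} ∈ U := (key W hxW a haL).2 haW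
    have hsub : {k | a.2 + t k ∈ W} ⊆
        {k | gk k a ∈ (L : Set _) ∩ Metric.closedBall a K} := by
      intro k hk
      exact ⟨(hgk_mem k a haL hk).1, Metric.mem_closedBall.2 (hgk_dist k a haL hk)⟩
    obtain ⟨v, hvB, hvU⟩ := ultra_pigeon U (hfin a K) (Filter.mem_of_superset hq hsub)
    have hUint : {k | (a.2 + t k ∈ W) ∧ gk k a = v} ∈ U := by
      have := Filter.inter_mem hq hvU
      exact this
    refine ⟨v, ⟨hvB.1, ?_⟩, Metric.mem_closedBall.1 hvB.2, hUint⟩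
    apply (key W' hxW' v hvB.1).1
    apply Filter.mem_of_superset hUint
    rintro k ⟨hk1, hk2⟩
    have h2 := (hgk_mem k a haL hk1).2
    rw [hk2] at h2
    exact h2
  have hstep' : ∀ b : (Fin m → ℝ) × (Fin n → ℝ), b ∈ L → b.2 + x ∈ W' →
      ∃ w, (w ∈ L ∧ w.2 + x ∈ W) ∧
        {k | (b.2 + t k ∈ W') ∧ gik k b = w} ∈ U := by
    intro b hbL hbW
    have hq : {k | b.2 + t k ∈ W'} ∈ U := (key W' hxW' b hbL).2 hbW
    have hsub : {k | b.2 + t k ∈ W'} ⊆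
        {k | gik k b ∈ (L : Set _) ∩ Metric.closedBall b K} := by
      intro k hk
      exact ⟨(hgik_mem k b hbL hk).1, Metric.mem_closedBall.2 (hgik_dist k b hbL hk)⟩
    obtain ⟨w, hwB, hwU⟩ := ultra_pigeon U (hfin b K) (Filter.mem_of_superset hq hsub)
    have hUint : {k | (b.2 + t k ∈ W') ∧ gik k b = w} ∈ U := by
      have := Filter.inter_mem hq hwU
      exact this
    refine ⟨w, ⟨hwB.1, ?_⟩, hUint⟩
    apply (key W hxW w hwB.1).1
    apply Filter.mem_of_superset hUint
    rintro k ⟨hk1, hk2⟩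
    have h2 := (hgik_mem k b hbL hk1).2
    rw [hk2] at h2
    exact h2
  -- assemble the bijection
  have hAmem : ∀ a : liftedSet L ((fun y => y - x) '' W),
      (a : (Fin m → ℝ) × (Fin n → ℝ)) ∈ L ∧
        (a : (Fin m → ℝ) × (Fin n → ℝ)).2 + x ∈ W :=
    fun a => ⟨a.2.1, (mem_sub_image_iff W x _).1 a.2.2⟩
  have hBmem : ∀ b : liftedSet L ((fun y => y - x) '' W'),
      (b : (Fin m → ℝ) × (Fin n → ℝ)) ∈ L ∧
        (b : (Fin m → ℝ) × (Fin n → ℝ)).2 + x ∈ W' :=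
    fun b => ⟨b.2.1, (mem_sub_image_iff W' x _).1 b.2.2⟩
  have h1 := fun a : liftedSet L ((fun y => y - x) '' W) =>
    hstep a (hAmem a).1 (hAmem a).2
  choose Φ hΦmem hΦdist hΦU using h1
  have h2 := fun b : liftedSet L ((fun y => y - x) '' W') =>
    hstep' b (hBmem b).1 (hBmem b).2
  choose Ψ hΨmem hΨU using h2
  set χ' : liftedSet L ((fun y => y - x) '' W) → liftedSet L ((fun y => y - x) '' W') :=
    fun a => ⟨Φ a, (hΦmem a).1, (mem_sub_image_iff W' x _).2 (hΦmem a).2⟩ with hχ'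
  set ψ' : liftedSet L ((fun y => y - x) '' W') → liftedSet L ((fun y => y - x) '' W) :=
    fun b => ⟨Ψ b, (hΨmem b).1, (mem_sub_image_iff W x _).2 (hΨmem b).2⟩ with hψ'
  refine ⟨χ', ⟨?_, ?_⟩, fun a => hΦdist a⟩
  · -- injectivity
    intro a b hab
    have hval : Φ a = Φ b := congrArg Subtype.val hab
    obtain ⟨k, hka, hkb⟩ := Filter.nonempty_of_mem (Filter.inter_mem (hΦU a) (hΦU b))
    apply Subtype.ext
    calc (a : (Fin m → ℝ) × (Fin n → ℝ))
        = gik k (gk k (a : (Fin m → ℝ) × (Fin n → ℝ))) :=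
          (hgik_gk k _ (hAmem a).1 hka.1).symm
      _ = gik k (gk k (b : (Fin m → ℝ) × (Fin n → ℝ))) := by rw [hka.2, hval, ← hkb.2]
      _ = (b : (Fin m → ℝ) × (Fin n → ℝ)) := hgik_gk k _ (hAmem b).1 hkb.1
  · -- surjectivity
    intro b
    refine ⟨ψ' b, ?_⟩
    apply Subtype.ext
    obtain ⟨k, hk1, hk2⟩ := Filter.nonempty_of_mem (Filter.inter_mem (hΨU b) (hΦU (ψ' b)))
    show Φ (ψ' b) = (b : (Fin m → ℝ) × (Fin n → ℝ))
    have hψval : ((ψ' b : (Fin m → ℝ) × (Fin n → ℝ))) = Ψ b := rfl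
    calc Φ (ψ' b) = gk k (ψ' b : (Fin m → ℝ) × (Fin n → ℝ)) := hk2.2.symm
      _ = gk k (gik k (b : (Fin m → ℝ) × (Fin n → ℝ))) := by rw [hψval, ← hk1.2]
      _ = (b : (Fin m → ℝ) × (Fin n → ℝ)) := hgk_gik k _ (hBmem b).1 hk1.1
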